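/- For integers n ≥ 2 and m ≥ 1, let L_m be the n × n integer matrix whose first row is (m+1, m, m, …, m) and whose i-th row, for 2 ≤ i ≤ n, has entry 1 in columns 1 through i and entry 0 in columns i+1 through n. Then the characteristic polynomial of L_m is det(λI − L_m) = (λ − 1)ⁿ − m·λⁿ⁻¹. -/

import Mathlib

/-- The `n × n` integer matrix `L_m` from Section 4 of the paper: the first row
is `(m+1, m, m, …, m)` and, for `2 ≤ i ≤ n` (1-indexed), the `i`-th row has
entry `1` in columns `1` through `i` and `0` in columns `i+1` through `n`. -/
def Lmat (n : ℕ) (m : ℤ) : Matrix (Fin n) (Fin n) ℤ :=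
  Matrix.of fun i j =>
    if (i : ℕ) = 0 then (if (j : ℕ) = 0 then m + 1 else m)
    else (if j ≤ i then 1 else 0)

open Polynomial Matrix

/-- The "unipotent" part: `A i j = 1` iff `j ≤ i`. -/
def Amat (n : ℕ) : Matrix (Fin n) (Fin n) ℤ :=
  Matrix.of fun i j => if j ≤ i then 1 else 0

lemma charpoly_Amat (n : ℕ) : (Amat n).charpoly = (X - 1 : ℤ[X]) ^ n := by
  rw [Matrix.charpoly]
  rw [Matrix.det_of_lowerTriangular _ (by
    intro i j hij
    have hij' : i < j := hij
    rw [charmatrix_apply_ne _ _ _ (ne_of_lt hij')]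
    simp [Amat, not_le.mpr hij'])]
  have h : ∀ i : Fin n, charmatrix (Amat n) i i = (X - 1 : ℤ[X]) := by
    intro i
    rw [charmatrix_apply_eq]
    simp [Amat]
  simp only [h]
  simp [Finset.prod_const]

lemma upperDet (n : ℕ) [NeZero n] :
    ((charmatrix (Amat n)).updateRow 0 (fun _ => (1 : ℤ[X]))).det = X ^ (n - 1) := by
  classical
  set M1 : Matrix (Fin n) (Fin n) ℤ[X] :=
    (charmatrix (Amat n)).updateRow 0 (fun _ => (1 : ℤ[X])) with hM1
  set E : Matrix (Fin n) (Fin n) ℤ[X] :=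
    Matrix.of (fun i k => if k = 0 then 1 else if i = k then 1 else 0) with hE
  set U : Matrix (Fin n) (Fin n) ℤ[X] :=
    Matrix.of (fun i j => if i = 0 then 1 else if i = j then X else if i ≤ j then 1 else 0)
      with hU
  have hM1entry : ∀ (i j : Fin n), i ≠ 0 →
      M1 i j = (if i = j then X else 0) - (if j ≤ i then 1 else 0) := by
    intro i j hi
    rw [hM1, Matrix.updateRow_ne hi]
    by_cases h : i = j
    · subst h; rw [charmatrix_apply_eq]; simp [Amat]
    · rw [charmatrix_apply_ne _ _ _ h]; simp [Amat]
      split_ifs <;> simp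
  have hEM : E * M1 = U := by
    refine Matrix.ext fun i j => ?_
    rw [Matrix.mul_apply]
    by_cases hi : i = 0
    · subst hi
      rw [Finset.sum_eq_single 0]
      · simp [hE, hU, hM1]
      · intro k _ hk
        have h2 : ¬ ((0 : Fin n) = k) := fun h => hk h.symm
        simp [hE, hk, h2]
      · simp
    · have h0i : (0 : Fin n) ≠ i := fun h => hi h.symm
      rw [Finset.sum_eq_add_of_mem 0 i (Finset.mem_univ _) (Finset.mem_univ _) h0i]
      · rw [hM1entry i j hi]
        simp only [hE, hU, Matrix.of_apply, if_pos rfl, if_neg hi, if_neg h0i.symm, if_pos rfl,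
          one_mul, hM1, Matrix.updateRow_self]
        by_cases h1 : i = j
        · subst h1; simp
        · simp only [if_neg h1]
          rcases le_or_gt j i with h2 | h2
          · have h3 : ¬ i ≤ j := fun h => h1 (le_antisymm h h2)
            simp [h2, h3]
          · have h3 : i ≤ j := le_of_lt h2
            simp [not_le.mpr h2, h3]
      · intro k _ hk
        obtain ⟨hk0, hki⟩ := hk
        simp [hE, hk0, Ne.symm hki]
  have hdetE : E.det = 1 := by
    rw [Matrix.det_of_lowerTriangular _ (by
      intro i j hij
      have hij' : i < j := hij
      have hj0 : j ≠ 0 := by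
        intro h; subst h
        have : (i : ℕ) < 0 := hij'
        omega
      have hne : i ≠ j := ne_of_lt hij'
      simp [hE, hj0, hne])]
    have h1 : ∀ i : Fin n, E i i = 1 := by
      intro i; by_cases h : i = 0 <;> simp [hE, h]
    simp [h1]
  have hdetU : U.det = X ^ (n - 1) := by
    rw [Matrix.det_of_upperTriangular (by
      intro i j hij
      have hi0 : i ≠ 0 := by
        intro h; subst h
        have : (j : ℕ) < 0 := hij
        omega
      have hij' : ¬ i ≤ j := not_le.mpr hij
      have hne : i ≠ j := ne_of_gt hij
      simp [hU, hi0, hne, hij'])]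
    obtain ⟨k, rfl⟩ : ∃ k, n = k + 1 := ⟨n - 1, by have := NeZero.pos n; omega⟩
    rw [Fin.prod_univ_succ]
    have h0 : U (0 : Fin (k+1)) (0 : Fin (k+1)) = 1 := by simp [hU]
    have hs : ∀ i : Fin k, U i.succ i.succ = X := by
      intro i; simp [hU, Fin.succ_ne_zero]
    simp [h0, hs]
  calc M1.det = E.det * M1.det := by rw [hdetE, one_mul]
    _ = (E * M1).det := (Matrix.det_mul _ _).symm
    _ = X ^ (n - 1) := by rw [hEM, hdetU]

/-- For `n ≥ 2` and `m ≥ 1`, the characteristic polynomial of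
the matrix `L_m` is `det (λI − L_m) = (λ − 1)ⁿ − m·λⁿ⁻¹`. -/
theorem charpoly_Lmat (n : ℕ) (hn : 2 ≤ n) (m : ℤ) (hm : 1 ≤ m) :
    (Lmat n m).charpoly = (Polynomial.X - 1) ^ n - Polynomial.C m * Polynomial.X ^ (n - 1) := by
  classical
  haveI : NeZero n := ⟨by omega⟩
  have hrow : charmatrix (Lmat n m) =
      (charmatrix (Amat n)).updateRow 0
        (charmatrix (Amat n) 0 + fun _ => -Polynomial.C m) := by
    refine Matrix.ext fun i j => ?_
    by_cases hi : i = 0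
    · subst hi
      rw [Matrix.updateRow_self]
      by_cases hj : j = 0
      · subst hj
        simp only [Pi.add_apply]
        rw [charmatrix_apply_eq, charmatrix_apply_eq]
        simp [Lmat, Amat]
        ring
      · have h0j : (0 : Fin n) ≠ j := fun h => hj h.symm
        have hjv : (j : ℕ) ≠ 0 := fun h => hj (Fin.ext h)
        simp only [Pi.add_apply]
        rw [charmatrix_apply_ne _ _ _ h0j, charmatrix_apply_ne _ _ _ h0j]
        have hle : ¬ j ≤ (0 : Fin n) := by
          intro h
          exact hjv (Nat.le_zero.mp h)
        simp [Lmat, Amat, hle, hjv, hj]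
    · rw [Matrix.updateRow_ne hi]
      have hiv : (i : ℕ) ≠ 0 := fun h => hi (Fin.ext h)
      by_cases h : i = j
      · subst h
        rw [charmatrix_apply_eq, charmatrix_apply_eq]
        simp [Lmat, Amat, hiv, hi]
      · rw [charmatrix_apply_ne _ _ _ h, charmatrix_apply_ne _ _ _ h]
        simp [Lmat, Amat, hiv, hi]
  have h2 : ((charmatrix (Amat n)).updateRow 0 (fun _ : Fin n => -Polynomial.C m)).det
      = -Polynomial.C m * X ^ (n - 1) := by
    have hcst : (fun _ : Fin n => -Polynomial.C m) =
        (-Polynomial.C m) • (fun _ : Fin n => (1 : ℤ[X])) := by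
      funext j; simp
    rw [hcst, Matrix.det_updateRow_smul, upperDet n]
  have key : (Lmat n m).charpoly =
      (Amat n).charpoly + (-Polynomial.C m) * X ^ (n - 1) := by
    rw [Matrix.charpoly, hrow, Matrix.det_updateRow_add, Matrix.updateRow_eq_self, h2,
      ← Matrix.charpoly]
  rw [key, charpoly_Amat]
  ring
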